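/- Let φ(x) = (x^β − 1)/β for some β ≠ 0 (or φ(x) = ln x). Then the associated Bregman superquantile is positively homogeneous: for every random variable X with continuous distribution supported in (0,∞) and every λ > 0, φ^{-1}( E_α[φ(λX)] ) = λ φ^{-1}( E_α[φ(X)] ), where E_α denotes expectation conditional on X ≥ F_X^{-1}(α). -/

import Mathlib

open MeasureTheory

/-- Lower quantile of a real random variable. -/
noncomputable def lowerQuantile {Ω : Type*} [MeasurableSpace Ω] (μ : Measure Ω)
    (X : Ω → ℝ) (α : ℝ) : ℝ :=
  sInf {x : ℝ | α ≤ (μ {ω | X ω ≤ x}).toReal}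

/-- Conditional expectation `E_α[f(X)] = E[f(X) 1_{X ≥ q_α}]/(1-α)` (continuous cdf). -/
noncomputable def condExpAlpha {Ω : Type*} [MeasurableSpace Ω] (μ : Measure Ω)
    (X : Ω → ℝ) (α : ℝ) (f : ℝ → ℝ) : ℝ :=
  (∫ ω in {ω | lowerQuantile μ X α ≤ X ω}, f (X ω) ∂μ) / (1 - α)

open Filter Topology in
lemma tail_measure {Ω : Type*} [MeasurableSpace Ω] (μ : Measure Ω) [IsProbabilityMeasure μ]
    (X : Ω → ℝ) (hXm : Measurable X) (hXpos : ∀ᵐ ω ∂μ, 0 < X ω)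
    (hcont : Continuous fun x : ℝ => (μ {ω | X ω ≤ x}).toReal)
    (α : ℝ) (hα : α ∈ Set.Ioo (0:ℝ) 1) :
    (μ {ω | lowerQuantile μ X α ≤ X ω}).toReal = 1 - α := by
  set F : ℝ → ℝ := fun x => (μ {ω | X ω ≤ x}).toReal with hF
  set T : Set ℝ := {x : ℝ | α ≤ F x} with hT
  have hfin : ∀ s : Set Ω, μ s ≠ ⊤ := fun s => (measure_lt_top μ s).ne
  have hFmono : Monotone F := by
    intro a b hab
    exact ENNReal.toReal_mono (hfin _) (measure_mono (fun ω h => le_trans h hab))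
  -- F vanishes on nonpositive reals
  have hFneg : ∀ x : ℝ, x < 0 → F x = 0 := by
    intro x hx
    have : μ {ω | X ω ≤ x} = 0 := by
      refine measure_mono_null (fun ω h => ?_) hXpos
      simp only [Set.mem_compl_iff, Set.mem_setOf_eq] at *
      intro h0; exact absurd (lt_of_lt_of_le (h0.trans_le h) hx.le) (lt_irrefl _)
    simp [hF, this]
  -- T is nonempty
  have hne : T.Nonempty := by
    have hU : (⋃ n : ℕ, {ω | X ω ≤ (n : ℝ)}) = Set.univ := by
      ext ω; simp only [Set.mem_iUnion, Set.mem_univ, iff_true, Set.mem_setOf_eq]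
      exact exists_nat_ge (X ω)
    have hmono : Monotone fun n : ℕ => {ω | X ω ≤ (n : ℝ)} := by
      intro a b hab
      exact Set.setOf_subset_setOf.mpr fun ω h => le_trans h (by exact_mod_cast hab)
    have h1 : Tendsto (fun n : ℕ => μ {ω | X ω ≤ (n : ℝ)}) atTop (𝓝 (μ Set.univ)) := by
      rw [← hU]; exact tendsto_measure_iUnion_atTop hmono
    have h2 : Tendsto (fun n : ℕ => F (n : ℝ)) atTop (𝓝 1) := by
      have := (ENNReal.tendsto_toReal (by simp : μ Set.univ ≠ ⊤)).comp h1
      simp only [measure_univ, ENNReal.toReal_one] at this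
      exact this
    obtain ⟨n, hn⟩ := (h2.eventually (eventually_ge_nhds hα.2)).exists
    exact ⟨(n : ℝ), hn⟩
  have hbdd : BddBelow T := by
    refine ⟨0, fun y hy => ?_⟩
    by_contra hy0
    push_neg at hy0
    have := hFneg y hy0
    rw [hT, Set.mem_setOf_eq, this] at hy
    exact absurd (lt_of_lt_of_le hα.1 hy) (lt_irrefl _)
  have hclosed : IsClosed T := isClosed_Ici.preimage hcont
  set q : ℝ := sInf T with hq
  have hqmem : q ∈ T := hclosed.csInf_mem hne hbdd
  have hFq_ge : α ≤ F q := hqmem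
  have hFq_le : F q ≤ α := by
    have hev : ∀ᶠ x in 𝓝[<] q, F x ≤ α := by
      filter_upwards [self_mem_nhdsWithin] with x hx
      by_contra h
      push_neg at h
      exact absurd (csInf_le hbdd (le_of_lt h : α ≤ F x)) (not_le.mpr hx)
    exact le_of_tendsto (hcont.continuousAt.tendsto.mono_left nhdsWithin_le_nhds) hev
  have hFq : F q = α := le_antisymm hFq_le hFq_ge
  -- measure of the strict lower set
  have hlt : (μ {ω | X ω < q}).toReal = α := by
    have hub : (μ {ω | X ω < q}).toReal ≤ α := by
      rw [← hFq]
      exact ENNReal.toReal_mono (hfin _) (measure_mono (Set.setOf_subset_setOf.mpr fun ω => le_of_lt))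
    have hlb : α ≤ (μ {ω | X ω < q}).toReal := by
      have hten : Tendsto (fun ε : ℝ => F (q - ε)) (𝓝[>] 0) (𝓝 (F q)) := by
        have h1 : Tendsto (fun ε : ℝ => q - ε) (𝓝[>] 0) (𝓝 q) := by
          have h0 : Tendsto (fun ε : ℝ => q - ε) (𝓝 (0:ℝ)) (𝓝 (q - 0)) :=
            tendsto_const_nhds.sub tendsto_id
          simpa using h0.mono_left nhdsWithin_le_nhds
        exact (hcont.continuousAt.tendsto).comp h1
      rw [← hFq]
      refine le_of_tendsto hten ?_
      filter_upwards [self_mem_nhdsWithin] with ε hε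
      exact ENNReal.toReal_mono (hfin _) (measure_mono (Set.setOf_subset_setOf.mpr fun ω h =>
        lt_of_le_of_lt h (by simpa using sub_lt_self q (Set.mem_Ioi.mp hε))))
    linarith
  have hcompl : {ω | lowerQuantile μ X α ≤ X ω} = {ω | X ω < q}ᶜ := by
    ext ω
    simp only [Set.mem_compl_iff, Set.mem_setOf_eq, not_lt, lowerQuantile, ← hT, ← hq, hF]
    exact Iff.rfl
  rw [hcompl, measure_compl (show MeasurableSet {ω | X ω < q} from hXm measurableSet_Iio) (hfin _),
    ENNReal.toReal_sub_of_le (measure_mono (Set.subset_univ _)) (hfin _)]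
  simp [hlt]

/-- Positive homogeneity of the Bregman superquantile for `φ(x) = (x^β - 1)/β`
(with explicit inverse `y ↦ (1 + βy)^{1/β}`) and for `φ = log` (inverse `exp`). -/
theorem bregmanSuperquantile_homogeneous {Ω : Type*} [MeasurableSpace Ω]
    (μ : Measure Ω) [IsProbabilityMeasure μ]
    (X : Ω → ℝ) (hXm : Measurable X) (hXpos : ∀ᵐ ω ∂μ, 0 < X ω)
    (hcont : Continuous fun x : ℝ => (μ {ω | X ω ≤ x}).toReal)
    (α : ℝ) (hα : α ∈ Set.Ioo (0:ℝ) 1) (lam : ℝ) (hlam : 0 < lam) :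
    (∀ β : ℝ, β ≠ 0 →
      Integrable (fun ω => (X ω ^ β - 1) / β) μ →
      (1 + β * condExpAlpha μ X α (fun x => ((lam * x) ^ β - 1) / β)) ^ (1 / β) =
        lam * (1 + β * condExpAlpha μ X α (fun x => (x ^ β - 1) / β)) ^ (1 / β)) ∧
    (Integrable (fun ω => Real.log (X ω)) μ →
      Real.exp (condExpAlpha μ X α (fun x => Real.log (lam * x))) =
        lam * Real.exp (condExpAlpha μ X α Real.log)) := by
  set S : Set Ω := {ω | lowerQuantile μ X α ≤ X ω} with hS
  have hSm : MeasurableSet S := hXm measurableSet_Ici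
  have hμS : (μ S).toReal = 1 - α := tail_measure μ X hXm hXpos hcont α hα
  have hα1 : (0:ℝ) < 1 - α := by linarith [hα.2]
  constructor
  · intro β hβ hInt
    have hIntS : Integrable (fun ω => (X ω ^ β - 1) / β) (μ.restrict S) := hInt.restrict
    set I : ℝ := ∫ ω in S, (X ω ^ β - 1) / β ∂μ with hI
    have hptw : ∀ᵐ ω ∂(μ.restrict S),
        ((lam * X ω) ^ β - 1) / β = lam ^ β * ((X ω ^ β - 1) / β) + (lam ^ β - 1) / β := by
      filter_upwards [ae_restrict_of_ae hXpos] with ω hω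
      rw [Real.mul_rpow hlam.le hω.le]
      field_simp
      ring
    have hI1 : (∫ ω in S, ((lam * X ω) ^ β - 1) / β ∂μ)
        = lam ^ β * I + (lam ^ β - 1) / β * (1 - α) := by
      rw [integral_congr_ae hptw,
        integral_add (hIntS.const_mul _) (integrable_const _),
        integral_const_mul, setIntegral_const, measureReal_def, hμS, smul_eq_mul]
      ring
    have hCE1 : condExpAlpha μ X α (fun x => ((lam * x) ^ β - 1) / β)
        = (lam ^ β * I + (lam ^ β - 1) / β * (1 - α)) / (1 - α) := by
      rw [condExpAlpha, ← hS, hI1]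
    have hCE0 : condExpAlpha μ X α (fun x => (x ^ β - 1) / β) = I / (1 - α) := rfl
    have key : 1 + β * ((lam ^ β * I + (lam ^ β - 1) / β * (1 - α)) / (1 - α))
        = lam ^ β * (1 + β * (I / (1 - α))) := by
      field_simp
      ring
    have hJint : Integrable (fun ω => X ω ^ β) (μ.restrict S) := by
      have heq : (fun ω => X ω ^ β) = fun ω => β * ((X ω ^ β - 1) / β) + 1 := by
        funext ω; field_simp; ring
      rw [heq]
      exact (hIntS.const_mul β).add (integrable_const 1)
    have hJ : β * I = (∫ ω in S, X ω ^ β ∂μ) - (1 - α) := by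
      rw [hI, ← integral_const_mul]
      have heq : ∀ ω, β * ((X ω ^ β - 1) / β) = X ω ^ β - 1 := fun ω => by field_simp
      simp_rw [heq]
      rw [integral_sub hJint (integrable_const 1), setIntegral_const, measureReal_def, hμS, smul_eq_mul, mul_one]
    have hA : 0 ≤ 1 + β * (I / (1 - α)) := by
      have hJ0 : 0 ≤ ∫ ω in S, X ω ^ β ∂μ := by
        refine setIntegral_nonneg_ae hSm ?_
        filter_upwards [hXpos] with ω hω _
        exact Real.rpow_nonneg hω.le β
      have heq : 1 + β * (I / (1 - α)) = (∫ ω in S, X ω ^ β ∂μ) / (1 - α) := by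
        rw [mul_div_assoc' β I (1 - α), hJ]
        field_simp
        ring
      rw [heq]
      positivity
    rw [hCE1, hCE0, key, Real.mul_rpow (Real.rpow_nonneg hlam.le β) hA,
      ← Real.rpow_mul hlam.le, mul_one_div_cancel hβ, Real.rpow_one]
  · intro hInt
    have hIntS : Integrable (fun ω => Real.log (X ω)) (μ.restrict S) := hInt.restrict
    set J : ℝ := ∫ ω in S, Real.log (X ω) ∂μ with hJ
    have hptw : ∀ᵐ ω ∂(μ.restrict S),
        Real.log (lam * X ω) = Real.log lam + Real.log (X ω) := by
      filter_upwards [ae_restrict_of_ae hXpos] with ω hω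
      exact Real.log_mul hlam.ne' hω.ne'
    have hI1 : (∫ ω in S, Real.log (lam * X ω) ∂μ) = Real.log lam * (1 - α) + J := by
      rw [integral_congr_ae hptw, integral_add (integrable_const _) hIntS,
        setIntegral_const, measureReal_def, hμS, smul_eq_mul]
      ring
    have hCE1 : condExpAlpha μ X α (fun x => Real.log (lam * x))
        = Real.log lam + J / (1 - α) := by
      rw [condExpAlpha, ← hS, hI1]
      field_simp
    have hCE0 : condExpAlpha μ X α Real.log = J / (1 - α) := rfl
    rw [hCE1, hCE0, Real.exp_add, Real.exp_log hlam]
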